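/- Let $(E,\mathcal{E},\mu)$ be a measure space and let $\phi_1,\dots,\phi_N,\psi_1,\dots,\psi_N\in L^2(\mu)$. Then $\frac{1}{N!}\int_{E^N} \det(\phi_i(\lambda_j))_{i,j=1}^N \cdot \det(\psi_i(\lambda_j))_{i,j=1}^N \; \mu(d\lambda_1)\cdots\mu(d\lambda_N) = \det\left(\int_E \phi_i\psi_j\, d\mu\right)_{i,j=1}^N$ (Andréief's identity). -/

import Mathlib

open MeasureTheory

/-- Andréief's identity: for `φ₁, …, φ_N, ψ₁, …, ψ_N ∈ L²(μ)`,
`(1/N!) ∫ det(φᵢ(λⱼ)) det(ψᵢ(λⱼ)) μ(dλ₁)⋯μ(dλ_N) = det(∫ φᵢ ψⱼ dμ)`. -/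
theorem andreief_identity {E : Type*} [MeasurableSpace E] (μ : Measure E) [SigmaFinite μ]
    (N : ℕ) (φ ψ : Fin N → E → ℂ)
    (hφ : ∀ i, MeasureTheory.MemLp (φ i) 2 μ)
    (hψ : ∀ i, MeasureTheory.MemLp (ψ i) 2 μ) :
    (1 / (Nat.factorial N : ℂ)) *
        ∫ l : Fin N → E,
          (Matrix.det (Matrix.of fun i j => φ i (l j))) *
            (Matrix.det (Matrix.of fun i j => ψ i (l j)))
          ∂(Measure.pi fun _ : Fin N => μ)
      = Matrix.det (Matrix.of fun i j => ∫ x, φ i x * ψ j x ∂μ) := by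
  classical
  letI : MeasureSpace E := ⟨μ⟩
  haveI : SigmaFinite (volume : Measure E) := ‹SigmaFinite μ›
  set A : Matrix (Fin N) (Fin N) ℂ := Matrix.of fun i j => ∫ x, φ i x * ψ j x ∂μ with hA
  have hInt : ∀ i j, Integrable (fun x => φ i x * ψ j x) μ := by
    intro i j
    have h := ((hψ j).smul (hφ i) (p := 2) (q := 2) (r := 1))
    rw [memLp_one_iff_integrable] at h
    exact h
  have key : (∫ l : Fin N → E,
          (Matrix.det (Matrix.of fun i j => φ i (l j))) *
            (Matrix.det (Matrix.of fun i j => ψ i (l j)))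
          ∂(Measure.pi fun _ : Fin N => μ))
      = (N.factorial : ℂ) * A.det := by
    have step1 : (∫ l : Fin N → E,
          (Matrix.det (Matrix.of fun i j => φ i (l j))) *
            (Matrix.det (Matrix.of fun i j => ψ i (l j)))
          ∂(Measure.pi fun _ : Fin N => μ))
        = ∑ σ : Equiv.Perm (Fin N), ∑ τ : Equiv.Perm (Fin N),
            ((Equiv.Perm.sign σ : ℂ) * (Equiv.Perm.sign τ : ℂ)) *
              ∏ j, A (σ j) (τ j) := by
      have hrw : ∀ l : Fin N → E,
          (Matrix.det (Matrix.of fun i j => φ i (l j))) *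
            (Matrix.det (Matrix.of fun i j => ψ i (l j)))
          = ∑ σ : Equiv.Perm (Fin N), ∑ τ : Equiv.Perm (Fin N),
            ((Equiv.Perm.sign σ : ℂ) * (Equiv.Perm.sign τ : ℂ)) *
              ∏ j, (φ (σ j) (l j) * ψ (τ j) (l j)) := by
        intro l
        rw [Matrix.det_apply', Matrix.det_apply', Finset.sum_mul_sum]
        refine Finset.sum_congr rfl fun σ _ => Finset.sum_congr rfl fun τ _ => ?_
        simp only [Matrix.of_apply]
        rw [mul_mul_mul_comm, ← Finset.prod_mul_distrib]
      simp_rw [hrw]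
      rw [integral_finset_sum]
      · refine Finset.sum_congr rfl fun σ _ => ?_
        rw [integral_finset_sum]
        · refine Finset.sum_congr rfl fun τ _ => ?_
          rw [integral_const_mul]
          congr 1
          have := MeasureTheory.integral_fintype_prod_eq_prod (ι := Fin N) (μ := fun _ => μ)
            (fun j (x : E) => φ (σ j) x * ψ (τ j) x)
          exact this
        · intro τ _
          exact (Integrable.fintype_prod (fun j => hInt (σ j) (τ j))).const_mul _
      · intro σ _
        refine integrable_finset_sum _ fun τ _ => ?_
        exact (Integrable.fintype_prod (fun j => hInt (σ j) (τ j))).const_mul _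
    rw [step1]
    have alg : ∀ σ : Equiv.Perm (Fin N),
        (∑ τ : Equiv.Perm (Fin N),
            ((Equiv.Perm.sign σ : ℂ) * (Equiv.Perm.sign τ : ℂ)) *
              ∏ j, A (σ j) (τ j)) = A.det := by
      intro σ
      rw [← Fintype.sum_equiv (Equiv.mulRight σ)
        (fun ρ => ((Equiv.Perm.sign σ : ℂ) * (Equiv.Perm.sign (ρ * σ) : ℂ)) *
          ∏ j, A (σ j) ((ρ * σ) j)) _ (fun ρ => rfl)]
      have hsq : ((Equiv.Perm.sign σ : ℤ) : ℂ) * ((Equiv.Perm.sign σ : ℤ) : ℂ) = 1 := by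
        rcases Int.units_eq_one_or (Equiv.Perm.sign σ) with h | h <;> simp [h]
      have : ∀ ρ : Equiv.Perm (Fin N),
          ((Equiv.Perm.sign σ : ℂ) * (Equiv.Perm.sign (ρ * σ) : ℂ)) *
            ∏ j, A (σ j) ((ρ * σ) j)
          = (Equiv.Perm.sign ρ : ℂ) * ∏ i, A i (ρ i) := by
        intro ρ
        have hprod : ∏ j, A (σ j) ((ρ * σ) j) = ∏ i, A i (ρ i) := by
          simp only [Equiv.Perm.mul_apply]
          exact Equiv.prod_comp σ (fun i => A i (ρ i))
        rw [hprod, Equiv.Perm.sign_mul]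
        push_cast
        rw [← mul_assoc, mul_comm ((Equiv.Perm.sign σ : ℤ) : ℂ) _, mul_assoc _ _ ((Equiv.Perm.sign σ : ℤ) : ℂ), hsq]
        ring
      simp_rw [this]
      rw [← Matrix.det_transpose A, Matrix.det_apply']
      rfl
    simp_rw [alg]
    rw [Finset.sum_const, Finset.card_univ, Fintype.card_perm]
    simp
  rw [key]
  have hfac : (N.factorial : ℂ) ≠ 0 := Nat.cast_ne_zero.mpr N.factorial_ne_zero
  field_simp
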